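/- Suppose n ∈ ℕ with n ≥ 2 and x_1, …, x_n ∈ Γ(2L) are such that for every j ∈ {1,…,n} there exists p ∈ {1,…,d} with x_j − x_{j+1} ≡ e_p or x_j − x_{j+1} ≡ −e_p componentwise mod 2L, where x_{n+1} := x_1. Then Σ_{j=1}^{n} (φ_1(x_{j+1}, x_j) − φ_2(x_{j+1}, x_j)) ≡ 0 (mod 2π), i.e. there exists m ∈ ℤ with Σ_{j=1}^{n} (φ_1(x_{j+1}, x_j) − φ_2(x_{j+1}, x_j)) = 2πm. -/

import Mathlib

open Finset

namespace PhaseAux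

variable {G : Type*} [AddCommGroup G] {d : ℕ}

/-- standard basis vector -/
def e (p : Fin d) : Fin d → ℤ := fun l => if l = p then 1 else 0

/-- truncation to the first `k` coordinates -/
def Tr (k : ℕ) (x : Fin d → ℤ) : Fin d → ℤ := fun l => if (l : ℕ) < k then x l else 0

lemma Tr_zero (x : Fin d → ℤ) : Tr 0 x = 0 := by
  funext l; simp [Tr]

lemma Tr_top (x : Fin d → ℤ) : Tr d x = x := by
  funext l; simp [Tr, l.isLt]

lemma Tr_succ (k : ℕ) (hk : k < d) (x : Fin d → ℤ) :
    Tr (k + 1) x = Tr k x + x ⟨k, hk⟩ • e ⟨k, hk⟩ := by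
  funext l
  simp only [Tr, e, Pi.add_apply, Pi.smul_apply, smul_eq_mul]
  rcases lt_trichotomy (l : ℕ) k with h | h | h
  · have : l ≠ ⟨k, hk⟩ := by intro hl; rw [hl] at h; simp at h
    simp [h, Nat.lt_succ_of_lt h, this]
  · have hl : l = ⟨k, hk⟩ := by apply Fin.ext; exact h
    subst hl
    simp [h]
  · have h1 : ¬ (l : ℕ) < k := by omega
    have h2 : ¬ (l : ℕ) < k + 1 := by omega
    have : l ≠ ⟨k, hk⟩ := by intro hl; rw [hl] at h; simp at h
    simp [h1, h2, this]

/-- signed sum of `f` from 0 to `t` -/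
def intSum (f : ℤ → G) (t : ℤ) : G :=
  (∑ i ∈ Finset.range t.toNat, f i) - (∑ i ∈ Finset.range (-t).toNat, f (-(i : ℤ) - 1))

lemma intSum_zero (f : ℤ → G) : intSum f 0 = 0 := by simp [intSum]

lemma intSum_succ (f : ℤ → G) (t : ℤ) : intSum f (t + 1) = intSum f t + f t := by
  rcases le_or_gt 0 t with h | h
  · have h1 : (t + 1).toNat = t.toNat + 1 := by omega
    have h2 : (-t).toNat = 0 := by omega
    have h3 : (-(t+1)).toNat = 0 := by omega
    have h4 : ((t.toNat : ℤ)) = t := by omega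
    simp only [intSum]
    rw [h1, h2, h3, Finset.sum_range_succ, h4]
    simp
  · have h2 : t.toNat = 0 := by omega
    have h3 : (t + 1).toNat = 0 := by omega
    have h4 : (-t).toNat = (-(t+1)).toNat + 1 := by omega
    have h5 : (-(((-(t+1)).toNat : ℤ))) - 1 = t := by omega
    simp only [intSum, h2, h3, h4, Finset.sum_range_succ, Finset.range_zero,
      Finset.sum_empty, h5]
    abel

/-- extensionality for functions on `ℤ` with equal increments -/
lemma int_ext {f g : ℤ → G} (h0 : f 0 = g 0)
    (h : ∀ t : ℤ, f (t + 1) - f t = g (t + 1) - g t) : ∀ t, f t = g t := by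
  intro t
  induction t using Int.induction_on with
  | zero => exact h0
  | succ t ih =>
    have ht := h t
    have : f (t + 1) = f t + (g (t + 1) - g t) := by rw [← ht]; abel
    rw [this, ih]; abel
  | pred t ih =>
    have ht := h (-t - 1)
    have h1 : (-t - 1 + 1 : ℤ) = -t := by ring
    rw [h1] at ht
    have : f (-t - 1) = f (-t) - (g (-t) - g (-t - 1)) := by rw [← ht]; abel
    rw [this, ih]; abel


variable (Ψ : (Fin d → ℤ) → (Fin d → ℤ) → G)

/-- signed sum of `Ψ` along the axis `p` starting at `x`, `t` steps -/
def A (p : Fin d) (x : Fin d → ℤ) (t : ℤ) : G :=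
  intSum (fun s => Ψ (x + (s + 1) • e p) (x + s • e p)) t

lemma A_zero (p : Fin d) (x : Fin d → ℤ) : A Ψ p x 0 = 0 := intSum_zero _

lemma A_succ (p : Fin d) (x : Fin d → ℤ) (t : ℤ) :
    A Ψ p x (t + 1) = A Ψ p x t + Ψ (x + (t + 1) • e p) (x + t • e p) :=
  intSum_succ _ t

section comm

variable (hcomm : ∀ (x : Fin d → ℤ) (p q : Fin d), p ≠ q →
    Ψ (x + e p + e q) (x + e p) - Ψ (x + e q) x
      = Ψ (x + e q + e p) (x + e q) - Ψ (x + e p) x)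

include hcomm

lemma A_base (p q : Fin d) (hpq : p ≠ q) (x : Fin d → ℤ) (t : ℤ) :
    A Ψ q (x + e p) t - A Ψ q x t
      = Ψ (x + t • e q + e p) (x + t • e q) - Ψ (x + e p) x := by
  refine int_ext (f := fun t => A Ψ q (x + e p) t - A Ψ q x t)
    (g := fun t => Ψ (x + t • e q + e p) (x + t • e q) - Ψ (x + e p) x) ?_ ?_ t
  · simp [A_zero]
  · intro t
    simp only [A_succ]
    have H := hcomm (x + t • e q) p q hpq
    have e1 : x + e p + (t + 1) • e q = x + t • e q + e p + e q := by
      rw [add_smul, one_smul]; abel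
    have e2 : x + e p + t • e q = x + t • e q + e p := by abel
    have e3 : x + (t + 1) • e q = x + t • e q + e q := by
      rw [add_smul, one_smul]; abel
    rw [e1, e2, e3]
    have H2 : Ψ (x + t • e q + e p + e q) (x + t • e q + e p)
        = Ψ (x + t • e q + e q + e p) (x + t • e q + e q)
          - Ψ (x + t • e q + e p) (x + t • e q) + Ψ (x + t • e q + e q) (x + t • e q) := by
      rw [sub_eq_iff_eq_add] at H
      rw [H]
    rw [H2]; abel


/-- the discrete potential: staircase sum from the origin -/
def Fpot (x : Fin d → ℤ) : G := ∑ p : Fin d, A Ψ p (Tr (p : ℕ) x) (x p)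

end comm

lemma Tr_add_e_of_ge {k : ℕ} {p : Fin d} (h : k ≤ (p : ℕ)) (x : Fin d → ℤ) :
    Tr k (x + e p) = Tr k x := by
  funext l
  simp only [Tr, Pi.add_apply, e]
  by_cases hl : (l : ℕ) < k
  · have : l ≠ p := Fin.ne_of_val_ne (by omega)
    simp [hl, this]
  · simp [hl]

lemma Tr_add_e_of_lt {k : ℕ} {p : Fin d} (h : (p : ℕ) < k) (x : Fin d → ℤ) :
    Tr k (x + e p) = Tr k x + e p := by
  funext l
  simp only [Tr, Pi.add_apply, e]
  by_cases hl : (l : ℕ) < k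
  · simp [hl]
  · have : l ≠ p := Fin.ne_of_val_ne (by omega)
    simp [hl, this]

section edge

variable (hcomm : ∀ (x : Fin d → ℤ) (p q : Fin d), p ≠ q →
    Ψ (x + e p + e q) (x + e p) - Ψ (x + e q) x
      = Ψ (x + e q + e p) (x + e q) - Ψ (x + e p) x)

include hcomm

lemma edge (x : Fin d → ℤ) (p : Fin d) :
    Fpot Ψ (x + e p) - Fpot Ψ x = Ψ (x + e p) x := by
  classical
  set D : ℕ → G := fun k =>
    if h : k < d then
      A Ψ ⟨k, h⟩ (Tr k (x + e p)) ((x + e p) ⟨k, h⟩) - A Ψ ⟨k, h⟩ (Tr k x) (x ⟨k, h⟩)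
    else 0 with hD
  have hsum : Fpot Ψ (x + e p) - Fpot Ψ x = ∑ k ∈ Finset.range d, D k := by
    rw [Fpot, Fpot, ← Finset.sum_sub_distrib, ← Fin.sum_univ_eq_sum_range D d]
    refine Finset.sum_congr rfl ?_
    intro q _
    simp only [hD, q.isLt, dif_pos, Fin.eta]
  have key : ∀ m, m ≤ d → ∑ k ∈ Finset.range m, D k =
      if m ≤ (p : ℕ) then 0 else Ψ (Tr m x + e p) (Tr m x) := by
    intro m
    induction m with
    | zero => intro _; simp
    | succ m ih =>
      intro hm1
      have hmd : m < d := hm1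
      have ihm := ih (Nat.le_of_lt hmd)
      rw [Finset.sum_range_succ, ihm]
      have hDm : D m = A Ψ ⟨m, hmd⟩ (Tr m (x + e p)) ((x + e p) ⟨m, hmd⟩)
          - A Ψ ⟨m, hmd⟩ (Tr m x) (x ⟨m, hmd⟩) := by simp [hD, hmd]
      rcases lt_trichotomy m (p : ℕ) with h | h | h
      · -- m < p : this block contributes 0
        have hq : (⟨m, hmd⟩ : Fin d) ≠ p := Fin.ne_of_val_ne (by simp only [Fin.val_mk]; omega)
        have h1 : Tr m (x + e p) = Tr m x := Tr_add_e_of_ge (by omega) x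
        have h2 : (x + e p) ⟨m, hmd⟩ = x ⟨m, hmd⟩ := by
          simp [Pi.add_apply, e, hq]
        rw [hDm, h1, h2, sub_self]
        have c1 : m ≤ (p : ℕ) := by omega
        have c2 : m + 1 ≤ (p : ℕ) := by omega
        simp [c1, c2]
      · -- m = p
        have hq : (⟨m, hmd⟩ : Fin d) = p := Fin.ext h
        have h1 : Tr m (x + e p) = Tr m x := Tr_add_e_of_ge (by omega) x
        have h2 : (x + e p) ⟨m, hmd⟩ = x ⟨m, hmd⟩ + 1 := by
          simp [Pi.add_apply, e, hq]
        have hTr : Tr (m + 1) x = Tr m x + x ⟨m, hmd⟩ • e ⟨m, hmd⟩ := Tr_succ m hmd x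
        rw [hDm, h1, h2]
        rw [A_succ]
        have c1 : m ≤ (p : ℕ) := by omega
        have c2 : ¬ (m + 1 ≤ (p : ℕ)) := by omega
        rw [if_pos c1, if_neg c2]
        have e1 : Tr m x + (x ⟨m, hmd⟩ + 1) • e ⟨m, hmd⟩ = Tr (m + 1) x + e p := by
          rw [hTr, add_smul, one_smul, hq]; abel
        have e2 : Tr m x + x ⟨m, hmd⟩ • e ⟨m, hmd⟩ = Tr (m + 1) x := by rw [hTr]
        rw [e1, e2]
        abel
      · -- m > p
        have hq : p ≠ (⟨m, hmd⟩ : Fin d) := Fin.ne_of_val_ne (by simp only [Fin.val_mk]; omega)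
        have h1 : Tr m (x + e p) = Tr m x + e p := Tr_add_e_of_lt (by omega) x
        have h2 : (x + e p) ⟨m, hmd⟩ = x ⟨m, hmd⟩ := by
          simp [Pi.add_apply, e, hq.symm]
        have hTr : Tr (m + 1) x = Tr m x + x ⟨m, hmd⟩ • e ⟨m, hmd⟩ := Tr_succ m hmd x
        rw [hDm, h1, h2]
        rw [A_base Ψ hcomm p ⟨m, hmd⟩ hq (Tr m x) (x ⟨m, hmd⟩)]
        have c1 : ¬ (m ≤ (p : ℕ)) := by omega
        have c2 : ¬ (m + 1 ≤ (p : ℕ)) := by omega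
        rw [if_neg c1, if_neg c2]
        have e1 : Tr m x + x ⟨m, hmd⟩ • e ⟨m, hmd⟩ + e p = Tr (m + 1) x + e p := by
          rw [hTr]
        have e2 : Tr m x + x ⟨m, hmd⟩ • e ⟨m, hmd⟩ = Tr (m + 1) x := by rw [hTr]
        rw [e1, e2]
        abel
  have hd' : ¬ (d ≤ (p : ℕ)) := by have := p.isLt; omega
  rw [hsum, key d le_rfl, if_neg hd', Tr_top]

end edge

lemma shift_inv {g : (Fin d → ℤ) → G} (v : Fin d → ℤ)
    (h : ∀ (x : Fin d → ℤ) (p : Fin d), g (x + v p • e p) = g x) :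
    ∀ (x c : Fin d → ℤ), g (x + fun l => v l * c l) = g x := by
  have h2 : ∀ (x : Fin d → ℤ) (p : Fin d) (t : ℤ), g (x + (v p * t) • e p) = g x := by
    intro x p t
    induction t using Int.induction_on with
    | zero => simp
    | succ t ih =>
      have e1 : x + (v p * (t + 1)) • e p = (x + (v p * t) • e p) + v p • e p := by
        rw [mul_add, mul_one, add_smul]; abel
      rw [e1, h, ih]
    | pred t ih =>
      have hw : ∀ w, g (w - v p • e p) = g w := by
        intro w
        have hh := h (w - v p • e p) p
        rw [sub_add_cancel] at hh
        rw [← hh]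
      have e1 : x + (v p * (-t - 1)) • e p = (x + (v p * (-t)) • e p) - v p • e p := by
        rw [mul_sub, mul_one, sub_smul]; abel
      rw [e1, hw, ih]
  intro x c
  have key : ∀ k, k ≤ d → g (x + Tr k (fun l => v l * c l)) = g x := by
    intro k
    induction k with
    | zero => intro _; rw [Tr_zero]; simp
    | succ k ih =>
      intro hk1
      have hkd : k < d := hk1
      rw [Tr_succ k hkd, ← add_assoc]
      rw [h2 (x + Tr k fun l => v l * c l) ⟨k, hkd⟩ (c ⟨k, hkd⟩)]
      exact ih (le_of_lt hkd)
  have hfin := key d le_rfl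
  rwa [Tr_top] at hfin

end PhaseAux

open PhaseAux

/-- Lemma B.1: for two admissible phases with the same plaquette fluxes and the same
fluxes through the large circles (mod 2π), the difference of the phases sums to `0`
(mod 2π) along any closed nearest-neighbor loop in `Γ(2L)`. -/
theorem phase_difference_circuit (d L : ℕ) (hd : 2 ≤ d) (hL : 1 ≤ L)
    (φ₁ φ₂ : (Fin d → ℤ) → (Fin d → ℤ) → ℝ)
    -- `φ₁` is an admissible phase
    (h1anti : ∀ x y : Fin d → ℤ, ∃ m : ℤ, φ₁ x y + φ₁ y x = 2 * Real.pi * m)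
    (h1per : ∀ (x y c : Fin d → ℤ), ∃ m : ℤ,
      φ₁ (fun j => x j + 2 * (L : ℤ) * c j) y - φ₁ x y = 2 * Real.pi * m)
    -- `φ₂` is an admissible phase
    (h2anti : ∀ x y : Fin d → ℤ, ∃ m : ℤ, φ₂ x y + φ₂ y x = 2 * Real.pi * m)
    (h2per : ∀ (x y c : Fin d → ℤ), ∃ m : ℤ,
      φ₂ (fun j => x j + 2 * (L : ℤ) * c j) y - φ₂ x y = 2 * Real.pi * m)
    -- equal plaquette fluxes mod 2π
    (hplaq : ∀ (x : Fin d → ℤ) (j k : Fin d), j < k → ∃ m : ℤ,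
      (φ₁ (fun l => x l + if l = j then 1 else 0) x +
          φ₁ (fun l => x l + (if l = j then 1 else 0) + if l = k then 1 else 0)
            (fun l => x l + if l = j then 1 else 0) +
          φ₁ (fun l => x l + if l = k then 1 else 0)
            (fun l => x l + (if l = j then 1 else 0) + if l = k then 1 else 0) +
          φ₁ x (fun l => x l + if l = k then 1 else 0)) -
        (φ₂ (fun l => x l + if l = j then 1 else 0) x +
          φ₂ (fun l => x l + (if l = j then 1 else 0) + if l = k then 1 else 0)
            (fun l => x l + if l = j then 1 else 0) +
          φ₂ (fun l => x l + if l = k then 1 else 0)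
            (fun l => x l + (if l = j then 1 else 0) + if l = k then 1 else 0) +
          φ₂ x (fun l => x l + if l = k then 1 else 0)) = 2 * Real.pi * m)
    -- equal fluxes through the large circles mod 2π
    (hcirc : ∀ (x : Fin d → ℤ) (j : Fin d), ∃ m : ℤ,
      (∑ i ∈ Finset.range (2 * L),
          φ₁ (fun l => x l + ((i : ℤ) + 1) * if l = j then 1 else 0)
            (fun l => x l + (i : ℤ) * if l = j then 1 else 0)) -
        (∑ i ∈ Finset.range (2 * L),
          φ₂ (fun l => x l + ((i : ℤ) + 1) * if l = j then 1 else 0)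
            (fun l => x l + (i : ℤ) * if l = j then 1 else 0)) = 2 * Real.pi * m)
    -- a closed nearest-neighbor loop in Γ(2L)
    (n : ℕ) (hn : 2 ≤ n) (x : Fin n → Fin d → ℤ)
    (hx : ∀ i j, 0 ≤ x i j ∧ x i j < 2 * (L : ℤ))
    (hadj : ∀ i : Fin n, ∃ p : Fin d,
      (∀ l : Fin d, (2 * (L : ℤ)) ∣
          (x i l - x ⟨((i : ℕ) + 1) % n, Nat.mod_lt _ (by omega)⟩ l -
            if l = p then 1 else 0)) ∨
      (∀ l : Fin d, (2 * (L : ℤ)) ∣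
          (x i l - x ⟨((i : ℕ) + 1) % n, Nat.mod_lt _ (by omega)⟩ l +
            if l = p then 1 else 0))) :
    ∃ m : ℤ,
      (∑ i : Fin n,
          (φ₁ (x ⟨((i : ℕ) + 1) % n, Nat.mod_lt _ (by omega)⟩) (x i) -
            φ₂ (x ⟨((i : ℕ) + 1) % n, Nat.mod_lt _ (by omega)⟩) (x i))) =
        2 * Real.pi * m := by
  classical
  have finmk : ∀ (a b : ℕ) (ha : a < n) (hb : b < n), a = b →
      (⟨a, ha⟩ : Fin n) = ⟨b, hb⟩ := by
    intro a b ha hb h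
    subst h
    rfl
  set π' : ℝ →+ AddCircle (2 * Real.pi) :=
    QuotientAddGroup.mk' (AddSubgroup.zmultiples (2 * Real.pi)) with hπ
  set Ψ : (Fin d → ℤ) → (Fin d → ℤ) → AddCircle (2 * Real.pi) :=
    fun a b => π' (φ₁ a b - φ₂ a b) with hΨ
  have hz : ∀ (r : ℝ), (∃ m : ℤ, r = 2 * Real.pi * m) → π' r = 0 := by
    rintro r ⟨m, hm⟩
    have : ((r : ℝ) : AddCircle (2 * Real.pi)) = 0 := by
      rw [AddCircle.coe_eq_zero_iff]
      exact ⟨m, by rw [hm, zsmul_eq_mul]; ring⟩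
    exact this
  have hanti' : ∀ a b, Ψ a b + Ψ b a = 0 := by
    intro a b
    obtain ⟨m1, hm1⟩ := h1anti a b
    obtain ⟨m2, hm2⟩ := h2anti a b
    have hh : Ψ a b + Ψ b a = π' ((φ₁ a b - φ₂ a b) + (φ₁ b a - φ₂ b a)) :=
      (map_add π' _ _).symm
    rw [hh]
    exact hz _ ⟨m1 - m2, by push_cast; linarith⟩
  have hneg : ∀ a b, Ψ a b = - Ψ b a := fun a b => eq_neg_of_add_eq_zero_left (hanti' a b)
  have hper1 : ∀ (a b c : Fin d → ℤ), Ψ (a + fun l => 2 * (L:ℤ) * c l) b = Ψ a b := by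
    intro a b c
    obtain ⟨m1, hm1⟩ := h1per a b c
    obtain ⟨m2, hm2⟩ := h2per a b c
    have hm1' : φ₁ (a + fun l => 2 * (L:ℤ) * c l) b - φ₁ a b = 2 * Real.pi * m1 := hm1
    have hm2' : φ₂ (a + fun l => 2 * (L:ℤ) * c l) b - φ₂ a b = 2 * Real.pi * m2 := hm2
    have hs : Ψ (a + fun l => 2 * (L:ℤ) * c l) b - Ψ a b
        = π' ((φ₁ (a + fun l => 2 * (L:ℤ) * c l) b - φ₂ (a + fun l => 2 * (L:ℤ) * c l) b)
            - (φ₁ a b - φ₂ a b)) := (map_sub π' _ _).symm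
    have h0 : Ψ (a + fun l => 2 * (L:ℤ) * c l) b - Ψ a b = 0 := by
      rw [hs]; exact hz _ ⟨m1 - m2, by push_cast; linarith⟩
    exact sub_eq_zero.mp h0
  have hper2 : ∀ (a b c : Fin d → ℤ), Ψ a (b + fun l => 2 * (L:ℤ) * c l) = Ψ a b := by
    intro a b c
    rw [hneg a (b + fun l => 2 * (L:ℤ) * c l), hper1 b a c, ← hneg a b]
  have hplaqG : ∀ (z : Fin d → ℤ) (j k : Fin d), j < k →
      Ψ (z + e j) z + Ψ (z + e j + e k) (z + e j)
        + Ψ (z + e k) (z + e j + e k) + Ψ z (z + e k) = 0 := by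
    intro z j k hjk
    obtain ⟨m1, hm1⟩ := hplaq z j k hjk
    have hm1' :
        (φ₁ (z + e j) z + φ₁ (z + e j + e k) (z + e j)
          + φ₁ (z + e k) (z + e j + e k) + φ₁ z (z + e k)) -
        (φ₂ (z + e j) z + φ₂ (z + e j + e k) (z + e j)
          + φ₂ (z + e k) (z + e j + e k) + φ₂ z (z + e k)) = 2 * Real.pi * m1 := hm1
    have hs : Ψ (z + e j) z + Ψ (z + e j + e k) (z + e j)
        + Ψ (z + e k) (z + e j + e k) + Ψ z (z + e k)
        = π' ((φ₁ (z + e j) z - φ₂ (z + e j) z)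
          + (φ₁ (z + e j + e k) (z + e j) - φ₂ (z + e j + e k) (z + e j))
          + (φ₁ (z + e k) (z + e j + e k) - φ₂ (z + e k) (z + e j + e k))
          + (φ₁ z (z + e k) - φ₂ z (z + e k))) := by
      simp only [hΨ, map_add]
    rw [hs]
    exact hz _ ⟨m1, by linarith⟩
  have hcomm0 : ∀ (z : Fin d → ℤ) (j k : Fin d), j < k →
      Ψ (z + e j + e k) (z + e j) - Ψ (z + e k) z
        = Ψ (z + e k + e j) (z + e k) - Ψ (z + e j) z := by
    intro z j k hjk
    have S := hplaqG z j k hjk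
    rw [hneg (z + e k) (z + e j + e k), hneg z (z + e k)] at S
    have ee : z + e k + e j = z + e j + e k := by abel
    rw [ee]
    refine sub_eq_zero.mp ?_
    calc Ψ (z + e j + e k) (z + e j) - Ψ (z + e k) z
          - (Ψ (z + e j + e k) (z + e k) - Ψ (z + e j) z)
        = Ψ (z + e j) z + Ψ (z + e j + e k) (z + e j)
          + -Ψ (z + e j + e k) (z + e k) + -Ψ (z + e k) z := by abel
      _ = 0 := S
  have hcommG : ∀ (z : Fin d → ℤ) (p q : Fin d), p ≠ q →
      Ψ (z + e p + e q) (z + e p) - Ψ (z + e q) z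
        = Ψ (z + e q + e p) (z + e q) - Ψ (z + e p) z := by
    intro z p q hpq
    rcases lt_or_gt_of_ne hpq with h | h
    · exact hcomm0 z p q h
    · exact (hcomm0 z q p h).symm
  have hcircG : ∀ (z : Fin d → ℤ) (j : Fin d),
      ∑ i ∈ Finset.range (2 * L),
        Ψ (z + ((i:ℤ) + 1) • e j) (z + (i:ℤ) • e j) = 0 := by
    intro z j
    obtain ⟨m1, hm1⟩ := hcirc z j
    have hm1' :
        (∑ i ∈ Finset.range (2 * L), φ₁ (z + ((i:ℤ) + 1) • e j) (z + (i:ℤ) • e j)) -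
        (∑ i ∈ Finset.range (2 * L), φ₂ (z + ((i:ℤ) + 1) • e j) (z + (i:ℤ) • e j))
          = 2 * Real.pi * m1 := hm1
    have hs : ∑ i ∈ Finset.range (2 * L),
        Ψ (z + ((i:ℤ) + 1) • e j) (z + (i:ℤ) • e j)
        = π' (∑ i ∈ Finset.range (2 * L),
            (φ₁ (z + ((i:ℤ) + 1) • e j) (z + (i:ℤ) • e j)
              - φ₂ (z + ((i:ℤ) + 1) • e j) (z + (i:ℤ) • e j))) := (map_sum π' _ _).symm
    rw [hs]
    exact hz _ ⟨m1, by rw [Finset.sum_sub_distrib]; exact hm1'⟩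
  -- potential
  set FF : (Fin d → ℤ) → AddCircle (2 * Real.pi) := Fpot Ψ with hFF
  have edgeP : ∀ (z : Fin d → ℤ) (p : Fin d), Ψ (z + e p) z = FF (z + e p) - FF z :=
    fun z p => (edge Ψ hcommG z p).symm
  have edgeM : ∀ (z : Fin d → ℤ) (p : Fin d), Ψ (z - e p) z = FF (z - e p) - FF z := by
    intro z p
    have h1 := edgeP (z - e p) p
    rw [sub_add_cancel] at h1
    rw [hneg (z - e p) z, h1]
    abel
  have FF0 : FF (0 : Fin d → ℤ) = 0 := by
    rw [hFF, Fpot]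
    have hA0 : ∀ p : Fin d, A Ψ p (Tr (p:ℕ) (0 : Fin d → ℤ)) ((0 : Fin d → ℤ) p) = 0 := by
      intro p
      have h0 : ((0 : Fin d → ℤ) p) = 0 := rfl
      rw [h0, A_zero]
    exact Finset.sum_eq_zero fun p _ => hA0 p
  have hΨshift : ∀ (w : Fin d → ℤ) (p j : Fin d),
      Ψ (w + (2 * (L:ℤ)) • e j + e p) (w + (2 * (L:ℤ)) • e j) = Ψ (w + e p) w := by
    intro w p j
    have pe : ((w + e p) + fun l => 2 * (L:ℤ) * e j l) = w + (2 * (L:ℤ)) • e j + e p := by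
      rw [show (fun l => 2 * (L:ℤ) * e j l) = (2 * (L:ℤ)) • e j from rfl]; abel
    have pe2 : (w + fun l => 2 * (L:ℤ) * e j l) = w + (2 * (L:ℤ)) • e j := by
      rw [show (fun l => 2 * (L:ℤ) * e j l) = (2 * (L:ℤ)) • e j from rfl]
    calc Ψ (w + (2 * (L:ℤ)) • e j + e p) (w + (2 * (L:ℤ)) • e j)
        = Ψ ((w + e p) + fun l => 2 * (L:ℤ) * e j l) (w + fun l => 2 * (L:ℤ) * e j l) := by
          rw [pe, pe2]
      _ = Ψ (w + e p) (w + fun l => 2 * (L:ℤ) * e j l) := hper1 _ _ _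
      _ = Ψ (w + e p) w := hper2 _ _ _
  have HFstep : ∀ (z : Fin d → ℤ) (j : Fin d), FF (z + (2 * (L:ℤ)) • e j) = FF z := by
    intro z j
    set g : (Fin d → ℤ) → AddCircle (2 * Real.pi) :=
      fun w => FF (w + (2 * (L:ℤ)) • e j) - FF w with hg
    have hg_edge : ∀ (w : Fin d → ℤ) (p : Fin d), g (w + (1:ℤ) • e p) = g w := by
      intro w p
      rw [one_smul]
      have key : FF (w + (2 * (L:ℤ)) • e j + e p) - FF (w + (2 * (L:ℤ)) • e j)
          = FF (w + e p) - FF w := by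
        rw [← edgeP, ← edgeP, hΨshift]
      have ha : (w + e p) + (2 * (L:ℤ)) • e j = w + (2 * (L:ℤ)) • e j + e p := by abel
      simp only [hg]
      rw [ha]
      rw [sub_eq_sub_iff_sub_eq_sub] at key
      exact key
    have hinv := shift_inv (g := g) (fun _ => (1:ℤ)) (fun w p => hg_edge w p) z (-z)
    have hz0 : (z + fun l => (1:ℤ) * (-z) l) = (0 : Fin d → ℤ) := by
      funext l; simp
    rw [hz0] at hinv
    -- hinv : g 0 = g z
    have hgz : g z = g 0 := hinv.symm
    have hg0 : g 0 = FF ((2 * (L:ℤ)) • e j) := by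
      simp only [hg, zero_add, FF0, sub_zero]
    have hFFc : FF ((2 * (L:ℤ)) • e j) = 0 := by
      have hw : ∀ p : Fin d, p ≠ j → ((2 * (L:ℤ)) • e j) p = 0 := by
        intro p hp
        simp [e, Pi.smul_apply, hp]
      have hsingle : FF ((2 * (L:ℤ)) • e j)
          = A Ψ j (Tr (j:ℕ) ((2 * (L:ℤ)) • e j)) (((2 * (L:ℤ)) • e j) j) := by
        rw [hFF, Fpot]
        refine Finset.sum_eq_single j ?_ ?_
        · intro p _ hp
          rw [hw p hp, A_zero]
        · intro hj; exact absurd (Finset.mem_univ j) hj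
      have hTrj : Tr (j:ℕ) ((2 * (L:ℤ)) • e j) = 0 := by
        funext l
        simp only [Tr, Pi.smul_apply, e, smul_eq_mul]
        by_cases hl : (l:ℕ) < (j:ℕ)
        · have hlj : l ≠ j := Fin.ne_of_val_ne (by omega)
          simp [hl, hlj]
        · simp [hl]
      have hval : ((2 * (L:ℤ)) • e j) j = 2 * (L:ℤ) := by
        simp [e, Pi.smul_apply]
      have hA : A Ψ j (0 : Fin d → ℤ) (2 * (L:ℤ))
          = ∑ i ∈ Finset.range (2*L),
              Ψ ((0 : Fin d → ℤ) + ((i:ℤ)+1) • e j) ((0 : Fin d → ℤ) + (i:ℤ) • e j) := by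
        rw [A, intSum]
        have ht : ((2 * (L:ℤ))).toNat = 2*L := by omega
        have ht2 : (-(2 * (L:ℤ))).toNat = 0 := by omega
        rw [ht, ht2]
        simp
      rw [hsingle, hTrj, hval, hA, hcircG 0 j]
    have := hgz.trans (hg0.trans hFFc)
    -- this : g z = 0, g z = FF (z + 2L e j) - FF z
    have h2 : FF (z + (2 * (L:ℤ)) • e j) - FF z = 0 := this
    exact sub_eq_zero.mp h2
  have FFper : ∀ (z c : Fin d → ℤ), FF (z + fun l => 2 * (L:ℤ) * c l) = FF z := by
    intro z c
    exact shift_inv (g := FF) (fun _ => 2 * (L:ℤ)) (fun w p => HFstep w p) z c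
  -- the loop
  set X : ℕ → (Fin d → ℤ) := fun k => x ⟨k % n, Nat.mod_lt _ (by omega)⟩ with hX
  have step : ∀ k, k < n → Ψ (X (k+1)) (X k) = FF (X (k+1)) - FF (X k) := by
    intro k hk
    have hXk : X k = x ⟨k, hk⟩ := by
      simp only [hX]
      exact congrArg x (finmk _ _ _ _ (Nat.mod_eq_of_lt hk))
    obtain ⟨p, hp⟩ := hadj ⟨k, hk⟩
    rcases hp with h | h
    · -- x_k - x_{k+1} ≡ e_p : step is -e_p
      have h' : ∀ l : Fin d, ∃ c : ℤ,
          x ⟨k, hk⟩ l - x ⟨(k + 1) % n, Nat.mod_lt _ (by omega)⟩ l -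
            (if l = p then 1 else 0) = 2 * (L:ℤ) * c := fun l => h l
      choose t ht using h'
      have hXe : X (k+1) = (X k - e p) + fun l => 2 * (L:ℤ) * (-(t l)) := by
        funext l
        have h1 := ht l
        have h2 : X (k+1) l = x ⟨(k + 1) % n, Nat.mod_lt _ (by omega)⟩ l := rfl
        simp only [Pi.add_apply, Pi.sub_apply, hXk, h2, e]
        linear_combination -h1
      calc Ψ (X (k+1)) (X k)
          = Ψ ((X k - e p) + fun l => 2 * (L:ℤ) * (-(t l))) (X k) := by rw [← hXe]
        _ = Ψ (X k - e p) (X k) := hper1 _ _ _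
        _ = FF (X k - e p) - FF (X k) := edgeM _ _
        _ = FF (X (k+1)) - FF (X k) := by rw [hXe, FFper]
    · -- step is +e_p
      have h' : ∀ l : Fin d, ∃ c : ℤ,
          x ⟨k, hk⟩ l - x ⟨(k + 1) % n, Nat.mod_lt _ (by omega)⟩ l +
            (if l = p then 1 else 0) = 2 * (L:ℤ) * c := fun l => h l
      choose t ht using h'
      have hXe : X (k+1) = (X k + e p) + fun l => 2 * (L:ℤ) * (-(t l)) := by
        funext l
        have h1 := ht l
        have h2 : X (k+1) l = x ⟨(k + 1) % n, Nat.mod_lt _ (by omega)⟩ l := rfl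
        simp only [Pi.add_apply, hXk, h2, e]
        linear_combination -h1
      calc Ψ (X (k+1)) (X k)
          = Ψ ((X k + e p) + fun l => 2 * (L:ℤ) * (-(t l))) (X k) := by rw [← hXe]
        _ = Ψ (X k + e p) (X k) := hper1 _ _ _
        _ = FF (X k + e p) - FF (X k) := edgeP _ _
        _ = FF (X (k+1)) - FF (X k) := by rw [hXe, FFper]
  have hsum0 : (∑ i : Fin n,
      Ψ (x ⟨((i:ℕ)+1) % n, Nat.mod_lt _ (by omega)⟩) (x i)) = 0 := by
    have h1 : ∀ i : Fin n, Ψ (x ⟨((i:ℕ)+1) % n, Nat.mod_lt _ (by omega)⟩) (x i)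
        = Ψ (X ((i:ℕ)+1)) (X (i:ℕ)) := by
      intro i
      have h2 : X (i:ℕ) = x i := by
        simp only [hX]
        have hi := i.isLt
        have : (⟨(i:ℕ) % n, Nat.mod_lt _ (by omega)⟩ : Fin n) = i := by
          refine Fin.val_injective ?_
          simp only [Fin.val_mk]
          exact Nat.mod_eq_of_lt hi
        rw [this]
      have h3 : X ((i:ℕ)+1) = x ⟨((i:ℕ)+1) % n, Nat.mod_lt _ (by omega)⟩ := rfl
      rw [h2, h3]
    rw [Finset.sum_congr rfl (fun i _ => h1 i)]
    rw [Fin.sum_univ_eq_sum_range (fun k => Ψ (X (k+1)) (X k)) n]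
    rw [Finset.sum_congr rfl (fun k hk => step k (Finset.mem_range.mp hk))]
    rw [Finset.sum_range_sub (fun k => FF (X k)) n]
    have hX0 : X n = X 0 := by
      simp only [hX]
      exact congrArg x (finmk _ _ _ _ (by rw [Nat.mod_self, Nat.zero_mod]))
    rw [hX0, sub_self]
  have hS : ((∑ i : Fin n,
      (φ₁ (x ⟨((i:ℕ)+1) % n, Nat.mod_lt _ (by omega)⟩) (x i) -
        φ₂ (x ⟨((i:ℕ)+1) % n, Nat.mod_lt _ (by omega)⟩) (x i)) : ℝ)
        : AddCircle (2 * Real.pi)) = 0 := by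
    calc ((∑ i : Fin n,
        (φ₁ (x ⟨((i:ℕ)+1) % n, Nat.mod_lt _ (by omega)⟩) (x i) -
          φ₂ (x ⟨((i:ℕ)+1) % n, Nat.mod_lt _ (by omega)⟩) (x i)) : ℝ)
          : AddCircle (2 * Real.pi))
        = π' (∑ i : Fin n,
          (φ₁ (x ⟨((i:ℕ)+1) % n, Nat.mod_lt _ (by omega)⟩) (x i) -
            φ₂ (x ⟨((i:ℕ)+1) % n, Nat.mod_lt _ (by omega)⟩) (x i))) := rfl
      _ = ∑ i : Fin n, π' (φ₁ (x ⟨((i:ℕ)+1) % n, Nat.mod_lt _ (by omega)⟩) (x i) -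
            φ₂ (x ⟨((i:ℕ)+1) % n, Nat.mod_lt _ (by omega)⟩) (x i)) := map_sum π' _ _
      _ = ∑ i : Fin n,
            Ψ (x ⟨((i:ℕ)+1) % n, Nat.mod_lt _ (by omega)⟩) (x i) := rfl
      _ = 0 := hsum0
  obtain ⟨m, hm⟩ := (AddCircle.coe_eq_zero_iff _).mp hS
  exact ⟨m, by rw [← hm, zsmul_eq_mul]; ring⟩
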